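/- Define ξ_j(a₁,a₂;t) = (a₁, a₁t, …, a₁t^{j−1}, a₂, a₂t, …, a₂t^{n−j−1}) ∈ (ℂ*)^n. Then the Lagrange interpolation polynomials of type A satisfy f_i(a₁,a₂;t; ξ_j(a₁,a₂;t)) = δ_{ij} for all 0 ≤ i,j ≤ n. -/

import Mathlib

open scoped BigOperators

/-- The k-th element (0-indexed) of a finite set of naturals, listed increasingly. -/
def sortedEl (I : Finset ℕ) (k : ℕ) : ℕ := (I.sort (· ≤ ·)).getD k 0

/-- The Lagrange interpolation polynomial of type A:
f_r(a₁,a₂;t;z) = ∑_{I⊆{1,…,n},|I|=r} ∏_{k=1}^{r}(z_{i_k}−a₂t^{i_k−k})/(a₁t^{k−1}−a₂t^{i_k−k})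
  ∏_{l=1}^{n−r}(z_{j_l}−a₁t^{j_l−l})/(a₂t^{l−1}−a₁t^{j_l−l}),
where I = {i₁<⋯<i_r} and {1,…,n}∖I = {j₁<⋯<j_{n−r}}; z is indexed by 1,…,n. -/
noncomputable def lagrangeF (a₁ a₂ t : ℂ) (n r : ℕ) (z : ℕ → ℂ) : ℂ :=
  ∑ I ∈ Finset.powersetCard r (Finset.Icc 1 n),
    (∏ k ∈ Finset.range r,
        (z (sortedEl I k) - a₂ * t ^ (sortedEl I k - (k + 1))) /
          (a₁ * t ^ k - a₂ * t ^ (sortedEl I k - (k + 1)))) *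
      ∏ l ∈ Finset.range (n - r),
        (z (sortedEl ((Finset.Icc 1 n) \ I) l) -
            a₁ * t ^ (sortedEl ((Finset.Icc 1 n) \ I) l - (l + 1))) /
          (a₂ * t ^ l - a₁ * t ^ (sortedEl ((Finset.Icc 1 n) \ I) l - (l + 1)))

/-- The point ξ_j(a₁,a₂;t) = (a₁, a₁t, …, a₁t^{j−1}, a₂, a₂t, …, a₂t^{n−j−1}),
indexed by 1,…,n. -/
noncomputable def xiNode (a₁ a₂ t : ℂ) (j : ℕ) : ℕ → ℂ :=
  fun k => if k ≤ j then a₁ * t ^ (k - 1) else a₂ * t ^ (k - j - 1)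

lemma sortedEl_mem (I : Finset ℕ) (k : ℕ) (h : k < I.card) : sortedEl I k ∈ I := by
  have hlen : k < (I.sort (· ≤ ·)).length := by rwa [Finset.length_sort]
  rw [sortedEl, List.getD_eq_getElem _ _ hlen]
  rw [← Finset.mem_sort (α := ℕ) (· ≤ ·)]
  exact List.getElem_mem hlen

lemma sortedEl_lt (I : Finset ℕ) (k m : ℕ) (hkm : k < m) (hm : m < I.card) :
    sortedEl I k < sortedEl I m := by
  have hlm : m < (I.sort (· ≤ ·)).length := by rwa [Finset.length_sort]
  have hlk : k < (I.sort (· ≤ ·)).length := lt_trans (by omega) hlm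
  rw [sortedEl, sortedEl, List.getD_eq_getElem _ _ hlk, List.getD_eq_getElem _ _ hlm]
  have := (Finset.sortedLT_sort I).strictMono_get (a := ⟨k, hlk⟩) (b := ⟨m, hlm⟩) (by exact hkm)
  simpa using this

lemma sortedEl_ge (I : Finset ℕ) (hpos : ∀ x ∈ I, 1 ≤ x) :
    ∀ k, k < I.card → k + 1 ≤ sortedEl I k := by
  intro k
  induction k with
  | zero => intro h; exact hpos _ (sortedEl_mem I 0 h)
  | succ k ih =>
    intro h
    have h1 := ih (by omega)
    have h2 := sortedEl_lt I k (k + 1) (by omega) h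
    omega

lemma sortedEl_zero_le (I : Finset ℕ) (x : ℕ) (hx : x ∈ I) : sortedEl I 0 ≤ x := by
  have hx' : x ∈ I.sort (· ≤ ·) := (Finset.mem_sort _).2 hx
  obtain ⟨m, hm, rfl⟩ := List.getElem_of_mem hx'
  have h0 : 0 < (I.sort (· ≤ ·)).length := by omega
  rw [sortedEl, List.getD_eq_getElem _ _ h0]
  rcases Nat.eq_zero_or_pos m with rfl | hmpos
  · exact le_refl _
  · exact le_of_lt ((Finset.sortedLT_sort I).strictMono_get
      (a := ⟨0, h0⟩) (b := ⟨m, hm⟩) (by exact hmpos))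

lemma sort_Icc (a b : ℕ) :
    Finset.sort (Finset.Icc a b) (· ≤ ·) = List.range' a (b + 1 - a) := by
  apply List.Perm.eq_of_pairwise' (r := (· ≤ ·))
  rotate_right
  · rw [List.perm_ext_iff_of_nodup (Finset.sort_nodup _ _) (List.nodup_range' _ _)]
    intro x
    rw [Finset.mem_sort, Finset.mem_Icc, List.mem_range'_1]
    omega
    exact Nat.one_pos
  · exact Finset.pairwise_sort _ _
  · exact List.Pairwise.imp le_of_lt (List.pairwise_lt_range' _ Nat.one_pos)

lemma sortedEl_Icc (a b k : ℕ) (h : k < b + 1 - a) : sortedEl (Finset.Icc a b) k = a + k := by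
  rw [sortedEl, sort_Icc]
  have hl : k < (List.range' a (b + 1 - a)).length := by simpa using h
  rw [List.getD_eq_getElem _ _ hl, List.getElem_range']
  omega

/-- Kronecker-delta property: f_i(a₁,a₂;t;ξ_j(a₁,a₂;t)) = δ_{ij}. -/
theorem lagrange_delta (n i j : ℕ) (hi : i ≤ n) (hj : j ≤ n) (a₁ a₂ t : ℂ)
    (ha₁ : a₁ ≠ 0) (ha₂ : a₂ ≠ 0) (ht : t ≠ 0)
    (hgen : ∀ k l : ℕ, a₁ * t ^ k ≠ a₂ * t ^ l)
    (hroot : ∀ k l : ℕ, k ≠ l → t ^ k ≠ t ^ l) :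
    lagrangeF a₁ a₂ t n i (xiNode a₁ a₂ t j) = if i = j then 1 else 0 := by
  classical
  have key_zero : ∀ I ∈ Finset.powersetCard i (Finset.Icc 1 n), I ≠ Finset.Icc 1 j →
      (∏ k ∈ Finset.range i,
        (xiNode a₁ a₂ t j (sortedEl I k) - a₂ * t ^ (sortedEl I k - (k + 1))) /
          (a₁ * t ^ k - a₂ * t ^ (sortedEl I k - (k + 1)))) *
      (∏ l ∈ Finset.range (n - i),
        (xiNode a₁ a₂ t j (sortedEl ((Finset.Icc 1 n) \ I) l) -
            a₁ * t ^ (sortedEl ((Finset.Icc 1 n) \ I) l - (l + 1))) /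
          (a₂ * t ^ l - a₁ * t ^ (sortedEl ((Finset.Icc 1 n) \ I) l - (l + 1)))) = 0 := by
    intro I hImem hIne
    obtain ⟨hIsub, hIcard⟩ := Finset.mem_powersetCard.1 hImem
    have hpos : ∀ x ∈ I, 1 ≤ x := fun x hx => (Finset.mem_Icc.1 (hIsub hx)).1
    rcases lt_or_ge j i with hij | hij
    · -- i > j : factor k = j of first product vanishes
      apply mul_eq_zero_of_left
      apply Finset.prod_eq_zero (Finset.mem_range.2 hij)
      have hc : j + 1 ≤ sortedEl I j := sortedEl_ge I hpos j (by omega)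
      rw [xiNode]
      simp only [if_neg (by omega : ¬ sortedEl I j ≤ j)]
      rw [Nat.sub_sub]
      rw [sub_self, zero_div]
    · -- i ≤ j : complement contains an element ≤ j, factor l = 0 vanishes
      have hm : ∃ m, m ∈ Finset.Icc 1 j ∧ m ∉ I := by
        by_contra h
        push_neg at h
        have hsub : Finset.Icc 1 j ⊆ I := fun m hm => h m hm
        have hcard : j ≤ i := by
          have := Finset.card_le_card hsub
          rwa [Nat.card_Icc, hIcard, Nat.add_sub_cancel] at this
        exact hIne ((Finset.eq_of_subset_of_card_le hsub
          (by rw [Nat.card_Icc, hIcard]; omega)).symm)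
      obtain ⟨m, hmIcc, hmI⟩ := hm
      rw [Finset.mem_Icc] at hmIcc
      have hmcomp : m ∈ Finset.Icc 1 n \ I := by
        rw [Finset.mem_sdiff, Finset.mem_Icc]
        exact ⟨⟨hmIcc.1, le_trans hmIcc.2 hj⟩, hmI⟩
      have hcompcard : (Finset.Icc 1 n \ I).card = n - i := by
        rw [Finset.card_sdiff_of_subset hIsub, Nat.card_Icc, hIcard, Nat.add_sub_cancel]
      have hnipos : 0 < n - i := by
        rw [← hcompcard]
        exact Finset.card_pos.2 ⟨m, hmcomp⟩
      apply mul_eq_zero_of_right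
      apply Finset.prod_eq_zero (Finset.mem_range.2 hnipos)
      have hc_le : sortedEl (Finset.Icc 1 n \ I) 0 ≤ m := sortedEl_zero_le _ m hmcomp
      have hc_mem := sortedEl_mem (Finset.Icc 1 n \ I) 0 (by omega)
      have hc_ge : 1 ≤ sortedEl (Finset.Icc 1 n \ I) 0 := by
        have := (Finset.mem_sdiff.1 hc_mem).1
        exact (Finset.mem_Icc.1 this).1
      rw [xiNode]
      simp only [if_pos (by omega : sortedEl (Finset.Icc 1 n \ I) 0 ≤ j)]
      norm_num
  by_cases hij : i = j
  · subst hij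
    rw [lagrangeF, if_pos rfl]
    have hmem : Finset.Icc 1 i ∈ Finset.powersetCard i (Finset.Icc 1 n) := by
      rw [Finset.mem_powersetCard]
      exact ⟨Finset.Icc_subset_Icc_right hi, by rw [Nat.card_Icc]; omega⟩
    rw [Finset.sum_eq_single_of_mem (Finset.Icc 1 i) hmem
      (fun I hI hne => key_zero I hI hne)]
    have hcomp : Finset.Icc 1 n \ Finset.Icc 1 i = Finset.Icc (i + 1) n := by
      ext x
      simp only [Finset.mem_sdiff, Finset.mem_Icc]
      omega
    rw [hcomp]
    have h1 : ∀ k ∈ Finset.range i,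
        (xiNode a₁ a₂ t i (sortedEl (Finset.Icc 1 i) k) -
            a₂ * t ^ (sortedEl (Finset.Icc 1 i) k - (k + 1))) /
          (a₁ * t ^ k - a₂ * t ^ (sortedEl (Finset.Icc 1 i) k - (k + 1))) = 1 := by
      intro k hk
      rw [Finset.mem_range] at hk
      have hs : sortedEl (Finset.Icc 1 i) k = 1 + k := sortedEl_Icc 1 i k (by omega)
      rw [hs, xiNode]
      simp only [if_pos (by omega : 1 + k ≤ i)]
      have he1 : 1 + k - 1 = k := by omega
      have he2 : 1 + k - (k + 1) = 0 := by omega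
      rw [he1, he2, pow_zero]
      exact div_self (sub_ne_zero.2 (by simpa using hgen k 0))
    have h2 : ∀ l ∈ Finset.range (n - i),
        (xiNode a₁ a₂ t i (sortedEl (Finset.Icc (i + 1) n) l) -
            a₁ * t ^ (sortedEl (Finset.Icc (i + 1) n) l - (l + 1))) /
          (a₂ * t ^ l - a₁ * t ^ (sortedEl (Finset.Icc (i + 1) n) l - (l + 1))) = 1 := by
      intro l hl
      rw [Finset.mem_range] at hl
      have hs : sortedEl (Finset.Icc (i + 1) n) l = (i + 1) + l :=
        sortedEl_Icc (i + 1) n l (by omega)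
      rw [hs, xiNode]
      simp only [if_neg (by omega : ¬ (i + 1) + l ≤ i)]
      have he1 : (i + 1) + l - i - 1 = l := by omega
      have he2 : (i + 1) + l - (l + 1) = i := by omega
      rw [he1, he2]
      exact div_self (sub_ne_zero.2 (Ne.symm (hgen i l)))
    rw [Finset.prod_congr rfl h1, Finset.prod_congr rfl h2, Finset.prod_const_one,
      Finset.prod_const_one, mul_one]
  · rw [lagrangeF, if_neg hij]
    apply Finset.sum_eq_zero
    intro I hI
    apply key_zero I hI
    intro h
    have := (Finset.mem_powersetCard.1 hI).2
    rw [h, Nat.card_Icc] at this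
    omega
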